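/- For every integer n ≥ 10 and every integer m with 3n - 11 ≤ m ≤ ⌊(n-1)/2⌋·⌈(n-1)/2⌉ + 2, there exists a non-bipartite K4^--saturated graph on n vertices with exactly m edges. -/

import Mathlib

/-- `G` contains a copy of `K₄⁻` (the diamond graph): four distinct vertices carrying all
six possible edges except the one between the last two. -/
def HasDiamond {V : Type*} (G : SimpleGraph V) : Prop :=
  ∃ a b c d : V, a ≠ b ∧ a ≠ c ∧ a ≠ d ∧ b ≠ c ∧ b ≠ d ∧ c ≠ d ∧
    G.Adj a b ∧ G.Adj a c ∧ G.Adj a d ∧ G.Adj b c ∧ G.Adj b d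

/-- `G` is `K₄⁻`-saturated: it contains no diamond, but adding any non-edge creates one. -/
def DiamondSaturated {V : Type*} (G : SimpleGraph V) : Prop :=
  ¬ HasDiamond G ∧ ∀ u v : V, u ≠ v → ¬ G.Adj u v →
    HasDiamond (G ⊔ SimpleGraph.fromEdgeSet {s(u, v)})

set_option linter.unusedVariables false
set_option linter.unreachableTactic false
set_option linter.unusedTactic false

namespace DSP

inductive Ext : Type
  | e1 | e2 | e3
deriving DecidableEq

instance : Fintype Ext := ⟨{.e1, .e2, .e3}, fun x => by cases x <;> decide⟩

abbrev V (a b : ℕ) : Type := Fin a ⊕ (Fin b ⊕ Ext)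

def adjB (s : ℕ) : Ext → ℕ → Prop
  | .e1, j => j = 0 ∨ s ≤ j
  | .e2, j => j < s
  | .e3, j => j = 1 ∨ s ≤ j

instance (s : ℕ) (t : Ext) (j : ℕ) : Decidable (adjB s t j) := by
  cases t <;> simp only [adjB] <;> infer_instance

def extAdj : Ext → Ext → Prop
  | .e1, .e2 => True
  | .e2, .e1 => True
  | .e2, .e3 => True
  | .e3, .e2 => True
  | _, _ => False

instance (t t' : Ext) : Decidable (extAdj t t') := by
  cases t <;> cases t' <;> simp only [extAdj] <;> infer_instance

def Adj (a b s : ℕ) : V a b → V a b → Prop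
  | .inl _, .inl _ => False
  | .inl _, .inr (.inl _) => True
  | .inl _, .inr (.inr _) => False
  | .inr (.inl _), .inl _ => True
  | .inr (.inl _), .inr (.inl _) => False
  | .inr (.inl j), .inr (.inr t) => adjB s t j.val
  | .inr (.inr _), .inl _ => False
  | .inr (.inr t), .inr (.inl j) => adjB s t j.val
  | .inr (.inr t), .inr (.inr t') => extAdj t t'

def G (a b s : ℕ) : SimpleGraph (V a b) where
  Adj := Adj a b s
  symm := by
    constructor
    intro x y h
    rcases x with i | j | t <;> rcases y with i' | j' | t' <;>
      simp only [Adj] at h ⊢ <;> try exact h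
    cases t <;> cases t' <;> simp_all [extAdj]
  loopless := by
    constructor
    intro x h
    rcases x with i | j | t <;> simp only [Adj] at h
    cases t <;> simp_all [extAdj]

instance (a b s : ℕ) (x y : V a b) : Decidable (Adj a b s x y) := by
  rcases x with i | j | t <;> rcases y with i' | j' | t' <;> simp only [Adj] <;> infer_instance

instance (a b s : ℕ) : DecidableRel (G a b s).Adj := fun x y =>
  inferInstanceAs (Decidable (Adj a b s x y))

variable {a b s : ℕ}

@[simp] lemma adj_AA (i i' : Fin a) : ¬ (G a b s).Adj (.inl i) (.inl i') := id
@[simp] lemma adj_AB (i : Fin a) (j : Fin b) : (G a b s).Adj (.inl i) (.inr (.inl j)) := trivial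
@[simp] lemma adj_AE (i : Fin a) (t : Ext) : ¬ (G a b s).Adj (.inl i) (.inr (.inr t)) := id
@[simp] lemma adj_BA (j : Fin b) (i : Fin a) : (G a b s).Adj (.inr (.inl j)) (.inl i) := trivial
@[simp] lemma adj_BB (j j' : Fin b) : ¬ (G a b s).Adj (.inr (.inl j)) (.inr (.inl j')) := id
@[simp] lemma adj_BE (j : Fin b) (t : Ext) :
    (G a b s).Adj (.inr (.inl j)) (.inr (.inr t)) ↔ adjB s t j.val := Iff.rfl
@[simp] lemma adj_EA (t : Ext) (i : Fin a) : ¬ (G a b s).Adj (.inr (.inr t)) (.inl i) := id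
@[simp] lemma adj_EB (t : Ext) (j : Fin b) :
    (G a b s).Adj (.inr (.inr t)) (.inr (.inl j)) ↔ adjB s t j.val := Iff.rfl
@[simp] lemma adj_EE (t t' : Ext) :
    (G a b s).Adj (.inr (.inr t)) (.inr (.inr t')) ↔ extAdj t t' := Iff.rfl


variable (ha : 2 ≤ a) (hs : 2 ≤ s) (hsb : s ≤ b)

set_option maxHeartbeats 2000000 in
lemma common_unique (hs : 2 ≤ s) {x y c d : V a b}
    (hxy : (G a b s).Adj x y) (hxc : (G a b s).Adj x c) (hyc : (G a b s).Adj y c)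
    (hxd : (G a b s).Adj x d) (hyd : (G a b s).Adj y d) : c = d := by
  rcases x with i | j | (_|_|_) <;> rcases y with i' | j' | (_|_|_) <;>
    rcases c with ci | cj | (_|_|_) <;> rcases d with di | dj | (_|_|_) <;>
      simp_all [adjB, extAdj] <;>
      first
        | omega
        | exact Fin.ext (by omega)

lemma noDiamond (hs : 2 ≤ s) : ¬ HasDiamond (G a b s) := by
  rintro ⟨p, q, r, t, hpq, hpr, hpt, hqr, hqt, hrt, apq, apr, apt, aqr, aqt⟩
  exact hrt (common_unique hs apq apr aqr apt aqt)


lemma mk_diamond {W : Type*} {H : SimpleGraph W} {p q r t : W}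
    (h1 : H.Adj p q) (h2 : H.Adj p r) (h3 : H.Adj p t) (h4 : H.Adj q r) (h5 : H.Adj q t)
    (n3 : r ≠ t) : HasDiamond H :=
  ⟨p, q, r, t, H.ne_of_adj h1, H.ne_of_adj h2, H.ne_of_adj h3, H.ne_of_adj h4,
    H.ne_of_adj h5, n3, h1, h2, h3, h4, h5⟩

lemma gadj {x y : V a b} {F : SimpleGraph (V a b)} (h : (G a b s).Adj x y) :
    (G a b s ⊔ F).Adj x y := Or.inl h

lemma nadj {u v : V a b} (hne : u ≠ v) :
    (G a b s ⊔ SimpleGraph.fromEdgeSet {s(u, v)}).Adj u v :=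
  Or.inr ((SimpleGraph.fromEdgeSet_adj _).mpr ⟨rfl, hne⟩)

set_option maxHeartbeats 2000000 in
lemma satur (ha : 2 ≤ a) (hs : 2 ≤ s) (hsb : s ≤ b) :
    ∀ u v : V a b, u ≠ v → ¬ (G a b s).Adj u v →
      HasDiamond (G a b s ⊔ SimpleGraph.fromEdgeSet {s(u, v)}) := by
  have hb : 2 ≤ b := le_trans hs hsb
  have h0b : (0 : ℕ) < b := by omega
  have h1b : (1 : ℕ) < b := by omega
  have h0a : (0 : ℕ) < a := by omega
  have h1a : (1 : ℕ) < a := by omega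
  intro u v hne hnadj
  rcases u with i | j | (_|_|_) <;> rcases v with i' | j' | (_|_|_)
  -- (A, A)
  · exact mk_diamond (nadj hne)
      (gadj (adj_AB i ⟨0, h0b⟩)) (gadj (adj_AB i ⟨1, h1b⟩))
      (gadj (adj_AB i' ⟨0, h0b⟩)) (gadj (adj_AB i' ⟨1, h1b⟩))
      (by simp)
  -- (A, B)
  · exact absurd (adj_AB i j') hnadj
  -- (A, e1)
  · exact mk_diamond (p := Sum.inr (Sum.inr Ext.e1)) (q := Sum.inr (Sum.inl ⟨0, h0b⟩))
      (r := Sum.inl i) (t := Sum.inr (Sum.inr Ext.e2))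
      (gadj (by simp [adjB])) ((nadj hne).symm) (gadj (by simp [extAdj]))
      (gadj (adj_BA _ _)) (gadj (by simp [adjB]; omega)) (by simp)
  -- (A, e2)
  · exact mk_diamond (p := Sum.inr (Sum.inr Ext.e2)) (q := Sum.inr (Sum.inl ⟨0, h0b⟩))
      (r := Sum.inl i) (t := Sum.inr (Sum.inr Ext.e1))
      (gadj (by simp [adjB]; omega)) ((nadj hne).symm) (gadj (by simp [extAdj]))
      (gadj (adj_BA _ _)) (gadj (by simp [adjB])) (by simp)
  -- (A, e3)
  · exact mk_diamond (p := Sum.inr (Sum.inr Ext.e3)) (q := Sum.inr (Sum.inl ⟨1, h1b⟩))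
      (r := Sum.inl i) (t := Sum.inr (Sum.inr Ext.e2))
      (gadj (by simp [adjB])) ((nadj hne).symm) (gadj (by simp [extAdj]))
      (gadj (adj_BA _ _)) (gadj (by simp [adjB]; omega)) (by simp)
  -- (B, A)
  · exact absurd (adj_BA j i') hnadj
  -- (B, B)
  · exact mk_diamond (nadj hne)
      (gadj (adj_BA j ⟨0, h0a⟩)) (gadj (adj_BA j ⟨1, h1a⟩))
      (gadj (adj_BA j' ⟨0, h0a⟩)) (gadj (adj_BA j' ⟨1, h1a⟩))
      (by simp)
  -- (B, e1)
  · simp only [adj_BE, adjB] at hnadj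
    push_neg at hnadj
    exact mk_diamond (p := Sum.inr (Sum.inr Ext.e2)) (q := Sum.inr (Sum.inr Ext.e1))
      (r := Sum.inr (Sum.inl j)) (t := Sum.inr (Sum.inl ⟨0, h0b⟩))
      (gadj (by simp [extAdj])) (gadj (by simp [adjB]; omega)) (gadj (by simp [adjB]; omega))
      ((nadj hne).symm) (gadj (by simp [adjB])) (by simp only [ne_eq, Sum.inr.injEq, Sum.inl.injEq]; intro hh; exact hnadj.1 (by rw [hh]))
  -- (B, e2)
  · simp only [adj_BE, adjB] at hnadj
    push_neg at hnadj
    exact mk_diamond (p := Sum.inr (Sum.inr Ext.e2)) (q := Sum.inr (Sum.inl j))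
      (r := Sum.inr (Sum.inr Ext.e1)) (t := Sum.inr (Sum.inr Ext.e3))
      ((nadj hne).symm) (gadj (by simp [extAdj])) (gadj (by simp [extAdj]))
      (gadj (by simp [adjB]; omega)) (gadj (by simp [adjB]; omega)) (by simp)
  -- (B, e3)
  · simp only [adj_BE, adjB] at hnadj
    push_neg at hnadj
    exact mk_diamond (p := Sum.inr (Sum.inr Ext.e2)) (q := Sum.inr (Sum.inr Ext.e3))
      (r := Sum.inr (Sum.inl j)) (t := Sum.inr (Sum.inl ⟨1, h1b⟩))
      (gadj (by simp [extAdj])) (gadj (by simp [adjB]; omega)) (gadj (by simp [adjB]; omega))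
      ((nadj hne).symm) (gadj (by simp [adjB])) (by simp only [ne_eq, Sum.inr.injEq, Sum.inl.injEq]; intro hh; exact hnadj.1 (by rw [hh]))
  -- (e1, A)
  · exact mk_diamond (p := Sum.inr (Sum.inr Ext.e1)) (q := Sum.inr (Sum.inl ⟨0, h0b⟩))
      (r := Sum.inl i') (t := Sum.inr (Sum.inr Ext.e2))
      (gadj (by simp [adjB])) (nadj hne) (gadj (by simp [extAdj]))
      (gadj (adj_BA _ _)) (gadj (by simp [adjB]; omega)) (by simp)
  -- (e1, B)
  · simp only [adj_EB, adjB] at hnadj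
    push_neg at hnadj
    exact mk_diamond (p := Sum.inr (Sum.inr Ext.e2)) (q := Sum.inr (Sum.inr Ext.e1))
      (r := Sum.inr (Sum.inl j')) (t := Sum.inr (Sum.inl ⟨0, h0b⟩))
      (gadj (by simp [extAdj])) (gadj (by simp [adjB]; omega)) (gadj (by simp [adjB]; omega))
      (nadj hne) (gadj (by simp [adjB])) (by simp only [ne_eq, Sum.inr.injEq, Sum.inl.injEq]; intro hh; exact hnadj.1 (by rw [hh]))
  -- (e1, e1)
  · exact absurd rfl hne
  -- (e1, e2)
  · exact absurd (by simp [extAdj] : (G a b s).Adj _ _) hnadj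
  -- (e1, e3)
  · exact mk_diamond (p := Sum.inr (Sum.inr Ext.e2)) (q := Sum.inr (Sum.inr Ext.e1))
      (r := Sum.inr (Sum.inr Ext.e3)) (t := Sum.inr (Sum.inl ⟨0, h0b⟩))
      (gadj (by simp [extAdj])) (gadj (by simp [extAdj])) (gadj (by simp [adjB]; omega))
      (nadj hne) (gadj (by simp [adjB])) (by simp)
  -- (e2, A)
  · exact mk_diamond (p := Sum.inr (Sum.inr Ext.e2)) (q := Sum.inr (Sum.inl ⟨0, h0b⟩))
      (r := Sum.inl i') (t := Sum.inr (Sum.inr Ext.e1))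
      (gadj (by simp [adjB]; omega)) (nadj hne) (gadj (by simp [extAdj]))
      (gadj (adj_BA _ _)) (gadj (by simp [adjB])) (by simp)
  -- (e2, B)
  · simp only [adj_EB, adjB] at hnadj
    push_neg at hnadj
    exact mk_diamond (p := Sum.inr (Sum.inr Ext.e2)) (q := Sum.inr (Sum.inl j'))
      (r := Sum.inr (Sum.inr Ext.e1)) (t := Sum.inr (Sum.inr Ext.e3))
      (nadj hne) (gadj (by simp [extAdj])) (gadj (by simp [extAdj]))
      (gadj (by simp [adjB]; omega)) (gadj (by simp [adjB]; omega)) (by simp)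
  -- (e2, e1)
  · exact absurd (by simp [extAdj] : (G a b s).Adj _ _) hnadj
  -- (e2, e2)
  · exact absurd rfl hne
  -- (e2, e3)
  · exact absurd (by simp [extAdj] : (G a b s).Adj _ _) hnadj
  -- (e3, A)
  · exact mk_diamond (p := Sum.inr (Sum.inr Ext.e3)) (q := Sum.inr (Sum.inl ⟨1, h1b⟩))
      (r := Sum.inl i') (t := Sum.inr (Sum.inr Ext.e2))
      (gadj (by simp [adjB])) (nadj hne) (gadj (by simp [extAdj]))
      (gadj (adj_BA _ _)) (gadj (by simp [adjB]; omega)) (by simp)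
  -- (e3, B)
  · simp only [adj_EB, adjB] at hnadj
    push_neg at hnadj
    exact mk_diamond (p := Sum.inr (Sum.inr Ext.e2)) (q := Sum.inr (Sum.inr Ext.e3))
      (r := Sum.inr (Sum.inl j')) (t := Sum.inr (Sum.inl ⟨1, h1b⟩))
      (gadj (by simp [extAdj])) (gadj (by simp [adjB]; omega)) (gadj (by simp [adjB]; omega))
      (nadj hne) (gadj (by simp [adjB])) (by simp only [ne_eq, Sum.inr.injEq, Sum.inl.injEq]; intro hh; exact hnadj.1 (by rw [hh]))
  -- (e3, e1)
  · exact mk_diamond (p := Sum.inr (Sum.inr Ext.e2)) (q := Sum.inr (Sum.inr Ext.e1))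
      (r := Sum.inr (Sum.inr Ext.e3)) (t := Sum.inr (Sum.inl ⟨0, h0b⟩))
      (gadj (by simp [extAdj])) (gadj (by simp [extAdj])) (gadj (by simp [adjB]; omega))
      ((nadj hne).symm) (gadj (by simp [adjB])) (by simp)
  -- (e3, e2)
  · exact absurd (by simp [extAdj] : (G a b s).Adj _ _) hnadj
  -- (e3, e3)
  · exact absurd rfl hne


lemma notCol (hs : 2 ≤ s) (hsb : s ≤ b) : ¬ (G a b s).Colorable 2 := by
  have h0b : (0 : ℕ) < b := by omega
  rintro ⟨C⟩
  have h12 : C (Sum.inr (Sum.inr Ext.e1)) ≠ C (Sum.inr (Sum.inr Ext.e2)) :=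
    C.valid (by simp [extAdj])
  have h13 : C (Sum.inr (Sum.inr Ext.e1)) ≠ C (Sum.inr (Sum.inl ⟨0, h0b⟩)) :=
    C.valid (by simp [adjB])
  have h23 : C (Sum.inr (Sum.inr Ext.e2)) ≠ C (Sum.inr (Sum.inl ⟨0, h0b⟩)) :=
    C.valid (by simp [adjB]; omega)
  have v1 := (C (Sum.inr (Sum.inr Ext.e1))).isLt
  have v2 := (C (Sum.inr (Sum.inr Ext.e2))).isLt
  have v3 := (C (Sum.inr (Sum.inl ⟨0, h0b⟩))).isLt
  have w12 : (C (Sum.inr (Sum.inr Ext.e1))).val ≠ (C (Sum.inr (Sum.inr Ext.e2))).val :=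
    fun h => h12 (Fin.ext h)
  have w13 : (C (Sum.inr (Sum.inr Ext.e1))).val ≠ (C (Sum.inr (Sum.inl ⟨0, h0b⟩))).val :=
    fun h => h13 (Fin.ext h)
  have w23 : (C (Sum.inr (Sum.inr Ext.e2))).val ≠ (C (Sum.inr (Sum.inl ⟨0, h0b⟩))).val :=
    fun h => h23 (Fin.ext h)
  omega

-- counting

lemma card_filter_val (p : ℕ → Prop) [DecidablePred p] :
    ((Finset.univ : Finset (Fin b)).filter fun j => p j.val).card
      = ((Finset.range b).filter p).card := by
  rw [Finset.card_filter, Finset.card_filter,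
    ← Fin.sum_univ_eq_sum_range (fun x => if p x then 1 else 0) b]

lemma cntB_e1 (hs : 2 ≤ s) (hsb : s ≤ b) :
    ((Finset.univ : Finset (Fin b)).filter fun j => adjB s Ext.e1 j.val).card = b - s + 1 := by
  rw [Finset.card_filter,
    Fin.sum_univ_eq_sum_range (fun x => if adjB s Ext.e1 x then 1 else 0) b,
    ← Finset.card_filter]
  have : (Finset.range b).filter (fun x => adjB s Ext.e1 x) = insert 0 (Finset.Ico s b) := by
    ext x
    rw [Finset.mem_filter]
    simp only [adjB, Finset.mem_filter, Finset.mem_range, Finset.mem_insert, Finset.mem_Ico]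
    omega
  rw [this, Finset.card_insert_of_notMem (by simp; omega), Nat.card_Ico]

lemma cntB_e2 (hsb : s ≤ b) :
    ((Finset.univ : Finset (Fin b)).filter fun j => adjB s Ext.e2 j.val).card = s := by
  rw [Finset.card_filter,
    Fin.sum_univ_eq_sum_range (fun x => if adjB s Ext.e2 x then 1 else 0) b,
    ← Finset.card_filter]
  have : (Finset.range b).filter (fun x => adjB s Ext.e2 x) = Finset.range s := by
    ext x
    rw [Finset.mem_filter]
    simp only [adjB, Finset.mem_filter, Finset.mem_range]
    omega
  rw [this, Finset.card_range]

lemma cntB_e3 (hs : 2 ≤ s) (hsb : s ≤ b) :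
    ((Finset.univ : Finset (Fin b)).filter fun j => adjB s Ext.e3 j.val).card = b - s + 1 := by
  rw [Finset.card_filter,
    Fin.sum_univ_eq_sum_range (fun x => if adjB s Ext.e3 x then 1 else 0) b,
    ← Finset.card_filter]
  have : (Finset.range b).filter (fun x => adjB s Ext.e3 x) = insert 1 (Finset.Ico s b) := by
    ext x
    rw [Finset.mem_filter]
    simp only [adjB, Finset.mem_filter, Finset.mem_range, Finset.mem_insert, Finset.mem_Ico]
    omega
  rw [this, Finset.card_insert_of_notMem (by simp; omega), Nat.card_Ico]

def embA : Fin a ↪ V a b := ⟨fun i => Sum.inl i, fun x y h => by simpa using h⟩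
def embB : Fin b ↪ V a b := ⟨fun j => Sum.inr (Sum.inl j), fun x y h => by simpa using h⟩
def embE : Ext ↪ V a b := ⟨fun t => Sum.inr (Sum.inr t), fun x y h => by simpa using h⟩

lemma degA (i : Fin a) : (G a b s).degree (Sum.inl i) = b := by
  have : (G a b s).neighborFinset (Sum.inl i) = Finset.univ.map embB := by
    ext y
    rcases y with i' | j' | t' <;>
      simp [SimpleGraph.mem_neighborFinset, embB, DFunLike.coe]
  rw [SimpleGraph.degree, this, Finset.card_map, Finset.card_univ, Fintype.card_fin]

lemma degB (j : Fin b) : (G a b s).degree (Sum.inr (Sum.inl j))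
    = a + ((Finset.univ : Finset Ext).filter fun t => adjB s t j.val).card := by
  have : (G a b s).neighborFinset (Sum.inr (Sum.inl j))
      = Finset.univ.map embA ∪ (((Finset.univ : Finset Ext).filter fun t => adjB s t j.val).map embE) := by
    ext y
    rcases y with i' | j' | t' <;>
      simp [SimpleGraph.mem_neighborFinset, embA, embE, DFunLike.coe]
  rw [SimpleGraph.degree, this, Finset.card_union_of_disjoint, Finset.card_map, Finset.card_map,
    Finset.card_univ, Fintype.card_fin]
  · simp [Finset.disjoint_left, embA, embE]

lemma degE (t : Ext) : (G a b s).degree (Sum.inr (Sum.inr t))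
    = ((Finset.univ : Finset (Fin b)).filter fun j => adjB s t j.val).card
      + ((Finset.univ : Finset Ext).filter fun t' => extAdj t t').card := by
  have : (G a b s).neighborFinset (Sum.inr (Sum.inr t))
      = (((Finset.univ : Finset (Fin b)).filter fun j => adjB s t j.val).map embB)
        ∪ (((Finset.univ : Finset Ext).filter fun t' => extAdj t t').map embE) := by
    ext y
    rcases y with i' | j' | t' <;>
      simp [SimpleGraph.mem_neighborFinset, embB, embE, DFunLike.coe]
  rw [SimpleGraph.degree, this, Finset.card_union_of_disjoint, Finset.card_map, Finset.card_map]
  · simp [Finset.disjoint_left, embB, embE, DFunLike.coe]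

lemma sum_ext (f : Ext → ℕ) : ∑ t : Ext, f t = f Ext.e1 + f Ext.e2 + f Ext.e3 := by
  rw [show (Finset.univ : Finset Ext) = {Ext.e1, Ext.e2, Ext.e3} by decide]
  rw [Finset.sum_insert (by decide), Finset.sum_insert (by decide), Finset.sum_singleton]
  ring

lemma count_edges (hs : 2 ≤ s) (hsb : s ≤ b) :
    (G a b s).edgeFinset.card + s = a * b + 2 * b + 4 := by
  have hsum := SimpleGraph.sum_degrees_eq_twice_card_edges (G a b s)
  rw [Fintype.sum_sum_type] at hsum
  rw [Fintype.sum_sum_type] at hsum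
  have hA : ∑ i : Fin a, (G a b s).degree (Sum.inl i) = a * b := by
    simp [degA, Finset.sum_const, Finset.card_univ, mul_comm]
  have hB : ∑ j : Fin b, (G a b s).degree (Sum.inr (Sum.inl j))
      = b * a + (2 * (b - s) + s + 2) := by
    have h1 : ∑ j : Fin b, (G a b s).degree (Sum.inr (Sum.inl j))
        = ∑ j : Fin b, (a + ((Finset.univ : Finset Ext).filter fun t => adjB s t j.val).card) := by
      exact Finset.sum_congr rfl fun j _ => degB j
    rw [h1, Finset.sum_add_distrib, Finset.sum_const, Finset.card_univ, Fintype.card_fin,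
      smul_eq_mul]
    congr 1
    have swap : ∑ j : Fin b, ((Finset.univ : Finset Ext).filter fun t => adjB s t j.val).card
        = ∑ t : Ext, ((Finset.univ : Finset (Fin b)).filter fun j => adjB s t j.val).card := by
      simp only [Finset.card_filter]
      exact Finset.sum_comm
    rw [swap, sum_ext]
    rw [cntB_e1 hs hsb, cntB_e2 hsb, cntB_e3 hs hsb]
    omega
  have hE : ∑ t : Ext, (G a b s).degree (Sum.inr (Sum.inr t)) = (2 * (b - s) + s + 2) + 4 := by
    rw [sum_ext (fun t => (G a b s).degree (Sum.inr (Sum.inr t)))]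
    rw [degE, degE, degE, cntB_e1 hs hsb, cntB_e2 hsb, cntB_e3 hs hsb]
    have c1 : ((Finset.univ : Finset Ext).filter fun t' => extAdj Ext.e1 t').card = 1 := by decide
    have c2 : ((Finset.univ : Finset Ext).filter fun t' => extAdj Ext.e2 t').card = 2 := by decide
    have c3 : ((Finset.univ : Finset Ext).filter fun t' => extAdj Ext.e3 t').card = 1 := by decide
    rw [c1, c2, c3]
    omega
  rw [hA, hB, hE] at hsum
  have hab : a * b = b * a := mul_comm a b
  omega


section Transport

variable {α β : Type*} (e : α ≃ β) (H : SimpleGraph α)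

def tr : SimpleGraph β where
  Adj x y := H.Adj (e.symm x) (e.symm y)
  symm := ⟨fun x y h => SimpleGraph.adj_symm H h⟩
  loopless := ⟨fun x h => H.irrefl h⟩

lemma tr_adj (x y : β) : (tr e H).Adj x y ↔ H.Adj (e.symm x) (e.symm y) := Iff.rfl

lemma tr_adj' (x y : α) : (tr e H).Adj (e x) (e y) ↔ H.Adj x y := by
  rw [tr_adj]; simp

lemma hasDiamond_tr_iff : HasDiamond (tr e H) ↔ HasDiamond H := by
  constructor
  · rintro ⟨p, q, r, t, n1, n2, n3, n4, n5, n6, a1, a2, a3, a4, a5⟩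
    exact ⟨e.symm p, e.symm q, e.symm r, e.symm t,
      e.symm.injective.ne n1, e.symm.injective.ne n2, e.symm.injective.ne n3,
      e.symm.injective.ne n4, e.symm.injective.ne n5, e.symm.injective.ne n6,
      a1, a2, a3, a4, a5⟩
  · rintro ⟨p, q, r, t, n1, n2, n3, n4, n5, n6, a1, a2, a3, a4, a5⟩
    exact ⟨e p, e q, e r, e t,
      e.injective.ne n1, e.injective.ne n2, e.injective.ne n3,
      e.injective.ne n4, e.injective.ne n5, e.injective.ne n6,
      (tr_adj' e H _ _).mpr a1, (tr_adj' e H _ _).mpr a2, (tr_adj' e H _ _).mpr a3,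
      (tr_adj' e H _ _).mpr a4, (tr_adj' e H _ _).mpr a5⟩

lemma col_tr (h : ¬ H.Colorable 2) : ¬ (tr e H).Colorable 2 := by
  rintro ⟨C⟩
  exact h ⟨SimpleGraph.Coloring.mk (fun v => C (e v))
    (fun {x y} hadj => C.valid ((tr_adj' e H x y).mpr hadj))⟩

lemma sup_lift {u v : β} {x y : α}
    (h : (H ⊔ SimpleGraph.fromEdgeSet {s(e.symm u, e.symm v)}).Adj x y) :
    (tr e H ⊔ SimpleGraph.fromEdgeSet {s(u, v)}).Adj (e x) (e y) := by
  rcases h with h | h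
  · exact Or.inl ((tr_adj' e H x y).mpr h)
  · obtain ⟨hmem, hne⟩ := (SimpleGraph.fromEdgeSet_adj _).mp h
    refine Or.inr ((SimpleGraph.fromEdgeSet_adj _).mpr ⟨?_, e.injective.ne hne⟩)
    rcases Sym2.eq_iff.mp hmem with ⟨h1, h2⟩ | ⟨h1, h2⟩
    · rw [Set.mem_singleton_iff, Sym2.eq_iff]
      left
      constructor
      · rw [h1]; simp
      · rw [h2]; simp
    · rw [Set.mem_singleton_iff, Sym2.eq_iff]
      right
      constructor
      · rw [h1]; simp
      · rw [h2]; simp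

lemma sat_tr (h : DiamondSaturated H) : DiamondSaturated (tr e H) := by
  obtain ⟨hnd, hsat⟩ := h
  refine ⟨fun hd => hnd ((hasDiamond_tr_iff e H).mp hd), ?_⟩
  intro u v hne hnadj
  have hx : e.symm u ≠ e.symm v := e.symm.injective.ne hne
  have hd := hsat _ _ hx hnadj
  obtain ⟨p, q, r, t, n1, n2, n3, n4, n5, n6, a1, a2, a3, a4, a5⟩ := hd
  exact ⟨e p, e q, e r, e t,
    e.injective.ne n1, e.injective.ne n2, e.injective.ne n3,
    e.injective.ne n4, e.injective.ne n5, e.injective.ne n6,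
    sup_lift e H a1, sup_lift e H a2, sup_lift e H a3, sup_lift e H a4, sup_lift e H a5⟩

lemma edgeSet_tr : (tr e H).edgeSet = Sym2.map e '' H.edgeSet := by
  ext z
  induction z using Sym2.ind with
  | _ x y =>
    simp only [SimpleGraph.mem_edgeSet, Set.mem_image]
    constructor
    · intro h
      refine ⟨s(e.symm x, e.symm y), h, ?_⟩
      rw [Sym2.map_pair_eq]
      simp
    · rintro ⟨w, hw, hmap⟩
      induction w using Sym2.ind with
      | _ p q =>
        rw [Sym2.map_pair_eq] at hmap
        rw [SimpleGraph.mem_edgeSet] at hw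
        rcases Sym2.eq_iff.mp hmap with ⟨h1, h2⟩ | ⟨h1, h2⟩
        · rw [tr_adj, ← h1, ← h2]
          simpa using hw
        · rw [tr_adj, ← h1, ← h2]
          simpa using hw.symm

lemma ncard_tr : (tr e H).edgeSet.ncard = H.edgeSet.ncard := by
  rw [edgeSet_tr, Set.ncard_image_of_injective _ (Sym2.map.injective e.injective)]

end Transport

lemma exists_graph (n m a b s : ℕ) (ha : 2 ≤ a) (hs : 2 ≤ s) (hsb : s ≤ b)
    (hn : a + b + 3 = n) (hm : m + s = a * b + 2 * b + 4) :
    ∃ G : SimpleGraph (Fin n), DiamondSaturated G ∧ ¬ G.Colorable 2 ∧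
      G.edgeSet.ncard = m := by
  have hExt : Fintype.card Ext = 3 := rfl
  have ecard : Fintype.card (V a b) = n := by
    simp only [Fintype.card_sum, Fintype.card_fin, hExt]
    omega
  let e := Fintype.equivFinOfCardEq ecard
  refine ⟨tr e (G a b s), sat_tr e _ ⟨noDiamond hs, satur ha hs hsb⟩,
    col_tr e _ (notCol hs hsb), ?_⟩
  rw [ncard_tr]
  have h1 : (G a b s).edgeSet.ncard = (G a b s).edgeFinset.card := by
    rw [Set.ncard_eq_toFinset_card']
    congr 1
  have h2 := count_edges (a := a) hs hsb
  omega

lemma cover (n m : ℕ) (hn : 10 ≤ n) (h1 : 3 * n - 11 ≤ m)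
    (h2 : m ≤ (n - 1) / 2 * (n / 2) + 2) :
    ∃ c, 4 ≤ c ∧ c ≤ n - 3 ∧ (c - 1) * (n - 1 - c) + 4 ≤ m ∧ m ≤ c * (n - 1 - c) + 2 := by
  classical
  have hP4 : (4 - 1) * (n - 1 - 4) + 4 ≤ m := by omega
  have hc04 : 4 ≤ (n - 1) / 2 := by omega
  set P : ℕ → Prop := fun c => (c - 1) * (n - 1 - c) + 4 ≤ m with hPdef
  set c := Nat.findGreatest P ((n - 1) / 2) with hc
  have hPc : (c - 1) * (n - 1 - c) + 4 ≤ m :=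
    Nat.findGreatest_spec (P := P) hc04 hP4
  have hc4 : 4 ≤ c := Nat.le_findGreatest hc04 hP4
  have hcc0 : c ≤ (n - 1) / 2 := Nat.findGreatest_le _
  refine ⟨c, hc4, by omega, hPc, ?_⟩
  by_cases hceq : c = (n - 1) / 2
  · have hq : n - 1 - c = n / 2 := by omega
    have hgoal : c * (n - 1 - c) = (n - 1) / 2 * (n / 2) := by rw [hq, hceq]
    rw [hgoal]
    exact h2
  · have hlt : c < (n - 1) / 2 := lt_of_le_of_ne hcc0 hceq
    have hnP : ¬ P (c + 1) :=
      Nat.findGreatest_is_greatest (n := (n - 1) / 2) (by omega) (by omega)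
    have hnP' : ¬ ((c + 1 - 1) * (n - 1 - (c + 1)) + 4 ≤ m) := hnP
    push_neg at hnP'
    have e2 : n - 1 - (c + 1) = n - 2 - c := by omega
    rw [show c + 1 - 1 = c from rfl, e2] at hnP'
    have e3 : n - 1 - c = (n - 2 - c) + 1 := by omega
    rw [e3, Nat.mul_succ]
    have hc1 : 1 ≤ c := by omega
    generalize hq : c * (n - 2 - c) = q at hnP' ⊢
    omega

end DSP

theorem stmt_11 (n m : ℕ) (hn : 10 ≤ n) (hm₁ : 3 * n - 11 ≤ m)
    (hm₂ : m ≤ ((n - 1) / 2) * (n / 2) + 2) :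
    ∃ G : SimpleGraph (Fin n), DiamondSaturated G ∧ ¬ G.Colorable 2 ∧
      G.edgeSet.ncard = m := by
  obtain ⟨c, hc4, hc3, hlo, hhi⟩ := DSP.cover n m hn hm₁ hm₂
  set a := c - 2 with hadef
  set b := n - 1 - c with hbdef
  have hca : c = a + 2 := by omega
  have hcm1 : c - 1 = a + 1 := by omega
  rw [hca, add_mul] at hhi
  rw [hcm1, add_mul] at hlo
  -- hlo : a * b + 1 * b + 4 ≤ m ; hhi : m ≤ a * b + 2 * b + 2
  have ha : 2 ≤ a := by omega
  set s := a * b + 2 * b + 4 - m with hsdef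
  have hb : a * b + b + 4 ≤ m := by
    have : (1 : ℕ) * b = b := one_mul b
    omega
  have hs : 2 ≤ s ∧ s ≤ b ∧ m + s = a * b + 2 * b + 4 := by
    generalize hq : a * b = q at hb hhi hsdef ⊢
    omega
  exact DSP.exists_graph n m a b s ha hs.1 hs.2.1 (by omega) hs.2.2
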